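/- Let 𝓟𝓘𝓟 be a PIPTA and consider a run in its parametric probabilistic zone graph reaching a symbolic state (ℓ, C). Let v be a parameter valuation. Then there exists an equivalent concrete run (with the same sequence of locations and edges) in v(𝓟𝓘𝓟) iff v satisfies C↓P, the projection of C onto the parameters. -/

import Mathlib

open scoped Classical

noncomputable section

/-! ### Basic relations -/

/-- Comparison relations `<, ≤, ≥, >` used in guards and zones. -/
inductive TRel : Type
  | lt | le | ge | gt
deriving DecidableEq

/-- Semantics of a comparison relation on reals. -/
def TRel.holds : TRel → ℝ → ℝ → Prop
  | .lt, a, b => a < b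
  | .le, a, b => a ≤ b
  | .ge, a, b => a ≥ b
  | .gt, a, b => a > b

/-! ### Distributions and interval distributions -/

/-- A finitely supported probability distribution over `S`. -/
structure FDist (S : Type*) where
  prob : S → ℝ
  nonneg : ∀ s, 0 ≤ prob s
  finsupp : (Function.support prob).Finite
  total : ∑ᶠ s, prob s = 1

/-- An interval distribution over `S`: each element gets a closed subinterval of `[0,1]`. -/
structure IntervalDist (S : Type*) where
  lo : S → ℝ
  hi : S → ℝ
  lo_nonneg : ∀ s, 0 ≤ lo s
  lo_le_hi : ∀ s, lo s ≤ hi s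
  hi_le_one : ∀ s, hi s ≤ 1

/-- A distribution implements an interval distribution iff each probability lies in
the corresponding interval. -/
def FDist.Matches {S : Type*} (μ : FDist S) (Υ : IntervalDist S) : Prop :=
  ∀ s, Υ.lo s ≤ μ.prob s ∧ μ.prob s ≤ Υ.hi s

/-- Feasible supports of an interval distribution. -/
def FS {S : Type*} (Υ : IntervalDist S) : Set (Set S) :=
  { T | ∃ μ : FDist S, μ.Matches Υ ∧ ∀ s, 0 < μ.prob s ↔ s ∈ T }

/-- Restriction of an interval distribution to a support: probabilities outside
the support are set to `[0,0]`. -/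
def IntervalDist.restrict {S : Type*} (Υ : IntervalDist S) (T : Set S) : IntervalDist S where
  lo := fun s => if s ∈ T then Υ.lo s else 0
  hi := fun s => if s ∈ T then Υ.hi s else 0
  lo_nonneg := by
    intro s; split
    · exact Υ.lo_nonneg s
    · exact le_rfl
  lo_le_hi := by
    intro s; split
    · exact Υ.lo_le_hi s
    · exact le_rfl
  hi_le_one := by
    intro s; split
    · exact Υ.hi_le_one s
    · exact zero_le_one

/-! ### IMDPs and MDPs -/

/-- An interval Markov decision process. -/
structure IMDP (S A : Type*) where
  init : S
  trans : Set (S × A × IntervalDist S)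

/-- A Markov decision process (with exact, finitely supported distributions). -/
structure MDP (S A : Type*) where
  init : S
  trans : Set (S × A × FDist S)

/-- Lifting (coupling) of a relation `R` to a distribution and an interval distribution. -/
def distLift {S' S : Type*} (R : Set (S' × S)) (ι : FDist S') (I : IntervalDist S) : Prop :=
  ∃ δ : FDist (S' × S),
    (∀ s', 0 < ι.prob s' → ∑ᶠ s, δ.prob (s', s) = 1) ∧
    (∀ s, I.lo s ≤ (∑ᶠ s', ι.prob s' * δ.prob (s', s)) ∧
      (∑ᶠ s', ι.prob s' * δ.prob (s', s)) ≤ I.hi s) ∧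
    (∀ s' s, 0 < δ.prob (s', s) → (s', s) ∈ R)

/-- An MDP implements an IMDP. -/
def MDP.Implements {S' S A : Type*} (M : MDP S' A) (IM : IMDP S A) : Prop :=
  ∃ R : Set (S' × S), (M.init, IM.init) ∈ R ∧
    ∀ s' s, (s', s) ∈ R →
      (∀ a ι, (s', a, ι) ∈ M.trans → ∃ I, (s, a, I) ∈ IM.trans ∧ distLift R ι I) ∧
      (∀ a I, (s, a, I) ∈ IM.trans → ∃ ι, (s', a, ι) ∈ M.trans ∧ distLift R ι I)

/-- An IMDP is consistent iff it admits at least one implementing MDP. -/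
def IMDP.Consistent {S A : Type*} (IM : IMDP S A) : Prop :=
  ∃ (S' : Type) (M : MDP S' A), M.Implements IM

/-- Reachable states of an MDP. -/
inductive MDP.Reach {S A : Type*} (M : MDP S A) : S → Prop
  | init : MDP.Reach M M.init
  | step {s a ι s'} : MDP.Reach M s → (s, a, ι) ∈ M.trans → 0 < ι.prob s' → MDP.Reach M s'

/-- Reachable states of an IMDP (an edge is possible if its upper probability is positive). -/
inductive IMDP.Reach {S A : Type*} (M : IMDP S A) : S → Prop
  | init : IMDP.Reach M M.init
  | step {s a I s'} : IMDP.Reach M s → (s, a, I) ∈ M.trans → 0 < I.hi s' → IMDP.Reach M s'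

/-- An MDP has the same structure as an IMDP: up to renaming (injectively on its
reachable part) and removal of unreachable states, its underlying directed graph is a
subgraph of the one of the IMDP. -/
def MDP.SameStructure {S' S A : Type*} (M : MDP S' A) (IM : IMDP S A) : Prop :=
  ∃ φ : S' → S, Set.InjOn φ { s | M.Reach s } ∧ φ M.init = IM.init ∧
    ∀ s₁ s₂ : S', M.Reach s₁ →
      (∃ a ι, (s₁, a, ι) ∈ M.trans ∧ 0 < ι.prob s₂) →
      ∃ a I, (φ s₁, a, I) ∈ IM.trans ∧ 0 < I.hi (φ s₂)

/-! ### Guards -/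

/-- An atomic (parametric) guard constraint `x ⋈ k` or `x ⋈ p`. -/
inductive GuardAtom (X P : Type*) : Type _
  | const (x : X) (r : TRel) (k : ℤ)
  | param (x : X) (r : TRel) (p : P)

/-- A guard is a (finite) conjunction of atomic constraints. -/
abbrev PGuard (X P : Type*) := List (GuardAtom X P)

/-- A valuated guard atom `x ⋈ q` with a rational constant. -/
inductive VGuardAtom (X : Type*) : Type _
  | atom (x : X) (r : TRel) (q : ℚ)

/-- A valuated guard. -/
abbrev VGuard (X : Type*) := List (VGuardAtom X)

/-- Valuating a guard atom with a (nonnegative rational) parameter valuation. -/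
def GuardAtom.val {X P : Type*} (v : P → NNRat) : GuardAtom X P → VGuardAtom X
  | .const x r k => .atom x r (k : ℚ)
  | .param x r p => .atom x r ((v p : ℚ))

/-- Satisfaction of a valuated guard atom by a clock valuation. -/
def VGuardAtom.sat {X : Type*} (w : X → ℝ) : VGuardAtom X → Prop
  | .atom x r q => r.holds (w x) (q : ℝ)

/-- Satisfaction of a valuated guard by a clock valuation. -/
def VGuard.sat {X : Type*} (w : X → ℝ) (g : VGuard X) : Prop :=
  ∀ c ∈ g, c.sat w

/-- A valuated guard is satisfiable iff some (nonnegative) clock valuation satisfies it. -/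
def VGuard.Satisfiable {X : Type*} (g : VGuard X) : Prop :=
  ∃ w : X → ℝ, (∀ x, 0 ≤ w x) ∧ VGuard.sat w g

/-! ### Zones (non-parametric syntactic guards) -/

/-- An atomic zone constraint: `x ⋈ k` or `x - y ⋈ k` with an integer `k`. -/
inductive ZoneAtom (X : Type*) : Type _
  | rect (x : X) (r : TRel) (k : ℤ)
  | diag (x y : X) (r : TRel) (k : ℤ)

/-- A zone: a conjunction of atomic zone constraints. -/
abbrev Zone (X : Type*) := List (ZoneAtom X)

/-- Satisfaction of an atomic zone constraint. -/
def ZoneAtom.sat {X : Type*} (w : X → ℝ) : ZoneAtom X → Prop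
  | .rect x r k => r.holds (w x) (k : ℝ)
  | .diag x y r k => r.holds (w x - w y) (k : ℝ)

/-- Satisfaction of a zone. -/
def Zone.sat {X : Type*} (w : X → ℝ) (g : Zone X) : Prop := ∀ c ∈ g, c.sat w

/-! ### (Interval) probabilistic timed automata, generic in the guard type `G` -/

/-- An interval probabilistic timed automaton with actions `A`, locations `L`, clocks `X`
and guards of type `G`. -/
structure IPTA (A L X G : Type*) where
  init : L
  edges : Set (L × G × A × IntervalDist (Finset X × L))

/-- A probabilistic timed automaton. -/
structure PTA (A L X G : Type*) where
  init : L
  edges : Set (L × G × A × FDist (Finset X × L))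

/-- The coupling-based lifting of a relation on locations to (interval) distributions
over (reset set, location) pairs. -/
def edistLift {L' L X : Type*} (R : Set (L' × L)) (υ : FDist (Finset X × L'))
    (Υ : IntervalDist (Finset X × L)) : Prop :=
  ∃ δ : FDist (L' × L),
    (∀ (ρ : Finset X) (m' : L'), 0 < υ.prob (ρ, m') → ∑ᶠ m : L, δ.prob (m', m) = 1) ∧
    (∀ (ρ : Finset X) (m : L),
      Υ.lo (ρ, m) ≤ (∑ᶠ m' : L', υ.prob (ρ, m') * δ.prob (m', m)) ∧
      (∑ᶠ m' : L', υ.prob (ρ, m') * δ.prob (m', m)) ≤ Υ.hi (ρ, m)) ∧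
    (∀ m' m, 0 < δ.prob (m', m) → (m', m) ∈ R)

/-- A PTA implements an IPTA (same actions, same clocks, same guards). -/
def PTA.Implements {A L' L X G : Type*} (T : PTA A L' X G) (IP : IPTA A L X G) : Prop :=
  ∃ R : Set (L' × L), (T.init, IP.init) ∈ R ∧
    ∀ l' l, (l', l) ∈ R →
      (∀ g a υ, (l', g, a, υ) ∈ T.edges → ∃ Υ, (l, g, a, Υ) ∈ IP.edges ∧ edistLift R υ Υ) ∧
      (∀ g a Υ, (l, g, a, Υ) ∈ IP.edges → ∃ υ, (l', g, a, υ) ∈ T.edges ∧ edistLift R υ Υ)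

/-- An IPTA is consistent iff it admits at least one implementing PTA. -/
def IPTA.Consistent {A L X G : Type*} (IP : IPTA A L X G) : Prop :=
  ∃ (L' : Type) (T : PTA A L' X G), T.Implements IP

/-! ### Parametric interval probabilistic timed automata -/

/-- A parametric interval probabilistic timed automaton. -/
structure PIPTA (A L X P : Type*) where
  init : L
  edges : Set (L × PGuard X P × A × IntervalDist (Finset X × L))

/-- The type of edges of a PIPTA. -/
abbrev EdgeT (A L X P : Type*) := L × PGuard X P × A × IntervalDist (Finset X × L)

/-- Valuation of a PIPTA: parameters are replaced by their (nonnegative rational) values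
and edges with unsatisfiable guards are removed. -/
def PIPTA.val {A L X P : Type*} (M : PIPTA A L X P) (v : P → NNRat) :
    IPTA A L X (VGuard X) where
  init := M.init
  edges := { e | ∃ l g a Υ, (l, g, a, Υ) ∈ M.edges ∧
      e = (l, g.map (GuardAtom.val v), a, Υ) ∧
      VGuard.Satisfiable (g.map (GuardAtom.val v)) }

/-- An atomic guard constraint respects a lower/upper partition of the parameters. -/
def GuardAtom.LURespects {X P : Type*} (isLower : P → Prop) : GuardAtom X P → Prop
  | .const _ _ _ => True
  | .param _ r p => (isLower p → r = .ge ∨ r = .gt) ∧ (¬ isLower p → r = .le ∨ r = .lt)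

/-- A PIPTA is L/U w.r.t. a partition of its parameters into lower-bound and
upper-bound parameters. -/
def PIPTA.IsLU {A L X P : Type*} (M : PIPTA A L X P) (isLower : P → Prop) : Prop :=
  ∀ e ∈ M.edges, ∀ c ∈ e.2.1, GuardAtom.LURespects isLower c

/-! ### Parametric (non-probabilistic) timed automata -/

/-- A parametric timed automaton (without invariants): transitions carry a guard,
an action, a set of clocks to reset, and a target location. -/
structure PPTA (A L X P : Type*) where
  init : L
  trans : Set (L × PGuard X P × A × Finset X × L)

/-- Reachability in the concrete semantics of a valuated parametric timed automaton. -/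
inductive PPTA.Reach {A L X P : Type*} [DecidableEq X] (T : PPTA A L X P) (v : P → NNRat) :
    L → (X → ℝ) → Prop
  | init : PPTA.Reach T v T.init (fun _ => 0)
  | step {l : L} {w : X → ℝ} {d : ℝ} {g : PGuard X P} {a : A} {ρ : Finset X} {l' : L} :
      PPTA.Reach T v l w →
      (l, g, a, ρ, l') ∈ T.trans →
      0 ≤ d →
      VGuard.sat (fun x => w x + d) (g.map (GuardAtom.val v)) →
      PPTA.Reach T v l' (fun x => if x ∈ ρ then 0 else w x + d)

/-- Runs of a valuated parametric timed automaton, represented by their sequence of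
delays and transitions, starting from a given configuration. -/
def PPTA.IsRunFrom {A L X P : Type*} [DecidableEq X] (T : PPTA A L X P) (v : P → NNRat) :
    L → (X → ℝ) → List (ℝ × (L × PGuard X P × A × Finset X × L)) → Prop
  | _, _, [] => True
  | l, w, (d, tr) :: rest =>
      0 ≤ d ∧ tr ∈ T.trans ∧ tr.1 = l ∧
      VGuard.sat (fun x => w x + d) (tr.2.1.map (GuardAtom.val v)) ∧
      PPTA.IsRunFrom T v tr.2.2.2.2 (fun x => if x ∈ tr.2.2.2.1 then 0 else w x + d) rest

/-- A run of a valuated parametric timed automaton (from the initial configuration). -/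
def PPTA.IsRun {A L X P : Type*} [DecidableEq X] (T : PPTA A L X P) (v : P → NNRat)
    (r : List (ℝ × (L × PGuard X P × A × Finset X × L))) : Prop :=
  T.IsRunFrom v T.init (fun _ => 0) r

/-- A PPTA is L/U w.r.t. a partition of its parameters. -/
def PPTA.IsLU {A L X P : Type*} (T : PPTA A L X P) (isLower : P → Prop) : Prop :=
  ∀ t ∈ T.trans, ∀ c ∈ t.2.1, GuardAtom.LURespects isLower c

/-! ### Concrete runs of PIPTAs -/

/-- Concrete runs of a valuated PIPTA along a list of (edge, reset set, target location)
choices: from configuration `(l, w)` to configuration `(lf, wf)`. Each step delays by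
some `d ≥ 0`, satisfies the (valuated) guard and takes a branch of positive possible
probability. -/
def PIPTA.ConcSteps {A L X P : Type*} [DecidableEq X] (M : PIPTA A L X P) (v : P → NNRat) :
    L → (X → ℝ) → List (EdgeT A L X P × Finset X × L) → L → (X → ℝ) → Prop
  | l, w, [], lf, wf => lf = l ∧ wf = w
  | l, w, (e, ρ, l') :: rest, lf, wf =>
      e ∈ M.edges ∧ e.1 = l ∧ 0 < e.2.2.2.hi (ρ, l') ∧
      ∃ d : ℝ, 0 ≤ d ∧ VGuard.sat (fun x => w x + d) (e.2.1.map (GuardAtom.val v)) ∧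
        PIPTA.ConcSteps M v l' (fun x => if x ∈ ρ then 0 else w x + d) rest lf wf

/-- A location is reachable in the concrete semantics of a valuated PIPTA. -/
def PIPTA.ReachLoc {A L X P : Type*} [DecidableEq X] (M : PIPTA A L X P) (v : P → NNRat)
    (l : L) : Prop :=
  ∃ tr w, M.ConcSteps v M.init (fun _ => 0) tr l w

/-! ### Zone graphs (semantic zones) -/

/-- Time elapsing of a (semantic) zone. -/
def elapse {X : Type*} (C : Set (X → ℝ)) : Set (X → ℝ) :=
  { w' | ∃ w ∈ C, ∃ d : ℝ, 0 ≤ d ∧ w' = fun x => w x + d }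

/-- Reset of a (semantic) zone. -/
def resetClocks {X : Type*} [DecidableEq X] (C : Set (X → ℝ)) (ρ : Finset X) :
    Set (X → ℝ) :=
  { w' | ∃ w ∈ C, w' = fun x => if x ∈ ρ then 0 else w x }

/-- Successor zone: intersect with the guard, reset, then let time elapse. -/
def zoneSucc {X : Type*} [DecidableEq X] (C : Set (X → ℝ)) (g : Zone X) (ρ : Finset X) :
    Set (X → ℝ) :=
  elapse (resetClocks (C ∩ { w | Zone.sat w g }) ρ)

/-- The probabilistic zone graph of an IPTA, as an IMDP whose states are pairs of a
location and a (semantic) zone, and whose actions are the edges of the IPTA. -/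
def IPTA.zoneGraph {A L X : Type*} [DecidableEq X] (IP : IPTA A L X (Zone X)) :
    IMDP (L × Set (X → ℝ)) (L × Zone X × A × IntervalDist (Finset X × L)) where
  init := (IP.init, elapse { w | ∀ x, w x = 0 })
  trans := { t | ∃ l C g a Υ, (l, g, a, Υ) ∈ IP.edges ∧ t.1 = (l, C) ∧
      t.2.1 = (l, g, a, Υ) ∧
      (∀ (ρ : Finset X) (l' : L), 0 < Υ.hi (ρ, l') →
        t.2.2.lo (l', zoneSucc C g ρ) = Υ.lo (ρ, l') ∧
        t.2.2.hi (l', zoneSucc C g ρ) = Υ.hi (ρ, l')) ∧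
      (∀ s' : L × Set (X → ℝ),
        (∀ (ρ : Finset X) (l' : L), 0 < Υ.hi (ρ, l') → s' ≠ (l', zoneSucc C g ρ)) →
        t.2.2.lo s' = 0 ∧ t.2.2.hi s' = 0) }

/-! ### Parametric zone graphs -/

/-- A (semantic) parametric zone: a set of pairs of a clock valuation and a parameter
valuation. -/
abbrev PZone (X P : Type*) := Set ((X → ℝ) × (P → ℝ))

/-- Time elapsing of a parametric zone (only clocks are delayed). -/
def pElapse {X P : Type*} (C : PZone X P) : PZone X P :=
  { wu | ∃ w u, (w, u) ∈ C ∧ ∃ d : ℝ, 0 ≤ d ∧ wu = (fun x => w x + d, u) }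

/-- Reset of a parametric zone. -/
def pReset {X P : Type*} [DecidableEq X] (C : PZone X P) (ρ : Finset X) : PZone X P :=
  { wu | ∃ w u, (w, u) ∈ C ∧ wu = (fun x => if x ∈ ρ then 0 else w x, u) }

/-- Satisfaction of a parametric guard atom by a clock and a parameter valuation. -/
def GuardAtom.psat {X P : Type*} (w : X → ℝ) (u : P → ℝ) : GuardAtom X P → Prop
  | .const x r k => r.holds (w x) (k : ℝ)
  | .param x r p => r.holds (w x) (u p)

/-- Satisfaction of a parametric guard. -/
def PGuard.psat {X P : Type*} (w : X → ℝ) (u : P → ℝ) (g : PGuard X P) : Prop :=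
  ∀ c ∈ g, c.psat w u

/-- The parametric zone associated with a guard. -/
def pGuardSet {X P : Type*} (g : PGuard X P) : PZone X P :=
  { wu | PGuard.psat wu.1 wu.2 g }

/-- Successor parametric zone. -/
def pZoneSucc {X P : Type*} [DecidableEq X] (C : PZone X P) (g : PGuard X P)
    (ρ : Finset X) : PZone X P :=
  pElapse (pReset (C ∩ pGuardSet g) ρ)

/-- The initial parametric zone: all clocks are `0`, parameters are nonnegative, and
time may elapse. -/
def pInitZone (X P : Type*) : PZone X P :=
  pElapse { wu | (∀ x, wu.1 x = 0) ∧ ∀ p, 0 ≤ wu.2 p }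

/-- The parametric probabilistic zone graph of a PIPTA, as an IMDP. -/
def PIPTA.pZoneGraph {A L X P : Type*} [DecidableEq X] (M : PIPTA A L X P) :
    IMDP (L × PZone X P) (EdgeT A L X P) where
  init := (M.init, pInitZone X P)
  trans := { t | ∃ l C g a Υ, (l, g, a, Υ) ∈ M.edges ∧ t.1 = (l, C) ∧
      t.2.1 = (l, g, a, Υ) ∧
      (∀ (ρ : Finset X) (l' : L), 0 < Υ.hi (ρ, l') →
        t.2.2.lo (l', pZoneSucc C g ρ) = Υ.lo (ρ, l') ∧
        t.2.2.hi (l', pZoneSucc C g ρ) = Υ.hi (ρ, l')) ∧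
      (∀ s' : L × PZone X P,
        (∀ (ρ : Finset X) (l' : L), 0 < Υ.hi (ρ, l') → s' ≠ (l', pZoneSucc C g ρ)) →
        t.2.2.lo s' = 0 ∧ t.2.2.hi s' = 0) }

/-- Symbolic runs in the parametric probabilistic zone graph along a list of
(edge, reset set, target location) choices. -/
def PIPTA.SymbSteps {A L X P : Type*} [DecidableEq X] (M : PIPTA A L X P) :
    L → PZone X P → List (EdgeT A L X P × Finset X × L) → L → PZone X P → Prop
  | l, C, [], lf, Cf => lf = l ∧ Cf = C
  | l, C, (e, ρ, l') :: rest, lf, Cf =>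
      e ∈ M.edges ∧ e.1 = l ∧ 0 < e.2.2.2.hi (ρ, l') ∧
      PIPTA.SymbSteps M l' (pZoneSucc C e.2.1 ρ) rest lf Cf

/-- A parameter valuation satisfies the projection of a parametric zone onto the
parameters. -/
def vSatZone {X P : Type*} (v : P → NNRat) (C : PZone X P) : Prop :=
  ∃ w : X → ℝ, (w, fun p => ((v p : ℚ) : ℝ)) ∈ C


/-- Valuated guard satisfaction is the same as parametric satisfaction under the
real-valued parameter valuation induced by `v`. -/
lemma guard_sat_iff {X P : Type*} (v : P → NNRat) (w : X → ℝ) (g : PGuard X P) :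
    VGuard.sat w (g.map (GuardAtom.val v)) ↔ PGuard.psat w (fun p => ((v p : ℚ) : ℝ)) g := by
  simp only [VGuard.sat, PGuard.psat, List.mem_map, forall_exists_index, and_imp]
  constructor
  · intro h c hc
    have := h (c.val v) c hc rfl
    cases c <;> simpa [GuardAtom.val, VGuardAtom.sat, GuardAtom.psat] using this
  · intro h c' c hc hval
    subst hval
    have := h c hc
    cases c <;> simpa [GuardAtom.val, VGuardAtom.sat, GuardAtom.psat] using this

/-- Time-elapse images are closed under further time elapsing. -/
lemma pElapse_add {X P : Type*} {S : PZone X P} {w : X → ℝ} {u : P → ℝ} {d : ℝ}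
    (hd : 0 ≤ d) (h : (w, u) ∈ pElapse S) : ((fun x => w x + d), u) ∈ pElapse S := by
  obtain ⟨w1, u1, h1, d1, hd1, heq⟩ := h
  rw [Prod.mk.injEq] at heq
  obtain ⟨rfl, rfl⟩ := heq
  exact ⟨w1, _, h1, d1 + d, by linarith,
    by rw [Prod.mk.injEq]; exact ⟨by funext x; ring, rfl⟩⟩

/-- A concrete run from a delayed valuation can be started earlier (absorbing the delay
into the first transition's delay). -/
lemma concSteps_delay {A L X P : Type*} [DecidableEq X] (M : PIPTA A L X P) (v : P → NNRat) :
    ∀ (tr : List (EdgeT A L X P × Finset X × L)) (l : L) (w : X → ℝ) (t : ℝ) (lf : L)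
      (wf : X → ℝ), 0 ≤ t → M.ConcSteps v l (fun x => w x + t) tr lf wf →
      ∃ wf', M.ConcSteps v l w tr lf wf' := by
  intro tr l w t lf wf ht h
  cases tr with
  | nil =>
    obtain ⟨rfl, rfl⟩ := h
    exact ⟨w, rfl, rfl⟩
  | cons step rest =>
    obtain ⟨e, ρ, l'⟩ := step
    obtain ⟨he, hel, hhi, d, hd, hsat, hnext⟩ := h
    have hE : (fun x => w x + (t + d)) = (fun x => (w x + t) + d) := by funext x; ring
    refine ⟨wf, he, hel, hhi, t + d, by linarith, ?_, ?_⟩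
    · rw [hE]; exact hsat
    · have hE2 : (fun x => if x ∈ ρ then (0 : ℝ) else w x + (t + d))
          = (fun x => if x ∈ ρ then (0 : ℝ) else (w x + t) + d) := by
        funext x; by_cases hx : x ∈ ρ <;> simp [hx, add_assoc]
      rw [hE2]; exact hnext

/-- Forward direction: concrete valuations along a run stay in the symbolic zones. -/
lemma conc_to_symb {A L X P : Type*} [DecidableEq X] (M : PIPTA A L X P) (v : P → NNRat) :
    ∀ (tr : List (EdgeT A L X P × Finset X × L)) (l0 : L) (S : PZone X P) (l : L)
      (C : PZone X P) (w0 wf : X → ℝ),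
      M.SymbSteps l0 (pElapse S) tr l C → M.ConcSteps v l0 w0 tr l wf →
      (w0, fun p => ((v p : ℚ) : ℝ)) ∈ pElapse S →
      (wf, fun p => ((v p : ℚ) : ℝ)) ∈ C := by
  intro tr
  induction tr with
  | nil =>
    rintro l0 S l C w0 wf ⟨rfl, rfl⟩ ⟨_, rfl⟩ h
    exact h
  | cons step rest ih =>
    obtain ⟨e, ρ, l'⟩ := step
    rintro l0 S l C w0 wf ⟨he, hel, hhi, hrest⟩ ⟨_, _, _, d, hd, hsat, hnext⟩ h0
    have hmemg : ((fun x => w0 x + d), fun p => ((v p : ℚ) : ℝ)) ∈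
        pElapse S ∩ pGuardSet e.2.1 :=
      ⟨pElapse_add hd h0, (guard_sat_iff v _ _).mp hsat⟩
    have hmem' : ((fun x => if x ∈ ρ then (0 : ℝ) else w0 x + d), fun p => ((v p : ℚ) : ℝ)) ∈
        pReset (pElapse S ∩ pGuardSet e.2.1) ρ :=
      ⟨_, _, hmemg, rfl⟩
    have hmem2 : ((fun x => if x ∈ ρ then (0 : ℝ) else w0 x + d), fun p => ((v p : ℚ) : ℝ)) ∈
        pZoneSucc (pElapse S) e.2.1 ρ :=
      ⟨_, _, hmem', 0, le_rfl, by simp⟩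
    exact ih l' _ l C _ wf hrest hnext hmem2

/-- Backward direction: a symbolic run whose final zone is nonempty at `v` yields a
concrete run from some valuation in the initial zone. -/
lemma symb_to_conc {A L X P : Type*} [DecidableEq X] (M : PIPTA A L X P) (v : P → NNRat) :
    ∀ (tr : List (EdgeT A L X P × Finset X × L)) (l0 : L) (C0 : PZone X P) (l : L)
      (C : PZone X P),
      M.SymbSteps l0 C0 tr l C → ∀ w : X → ℝ, (w, fun p => ((v p : ℚ) : ℝ)) ∈ C →
      ∃ w0, (w0, fun p => ((v p : ℚ) : ℝ)) ∈ C0 ∧ ∃ wf, M.ConcSteps v l0 w0 tr l wf := by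
  intro tr
  induction tr with
  | nil =>
    rintro l0 C0 l C ⟨rfl, rfl⟩ w hw
    exact ⟨w, hw, w, rfl, rfl⟩
  | cons step rest ih =>
    obtain ⟨e, ρ, l'⟩ := step
    rintro l0 C0 l C ⟨he, hel, hhi, hrest⟩ w hw
    obtain ⟨w1, hw1, wf, hrun⟩ := ih l' _ l C hrest w hw
    obtain ⟨wr, ur, hwr, d, hd, heq⟩ := hw1
    rw [Prod.mk.injEq] at heq
    obtain ⟨rfl, hu⟩ := heq
    obtain ⟨w2, u2, hw2, heq2⟩ := hwr
    rw [Prod.mk.injEq] at heq2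
    obtain ⟨rfl, rfl⟩ := heq2
    rw [← hu] at hw2
    have hsat0 : VGuard.sat (fun x => w2 x + 0) (e.2.1.map (GuardAtom.val v)) := by
      rw [show (fun x => w2 x + 0) = w2 from funext fun x => add_zero _]
      exact (guard_sat_iff v _ _).mpr hw2.2
    have hE : (fun x => (if x ∈ ρ then (0 : ℝ) else w2 x + 0) + d)
        = (fun x => (if x ∈ ρ then (0 : ℝ) else w2 x) + d) := by
      funext x; by_cases hx : x ∈ ρ <;> simp [hx]
    obtain ⟨wf', hrun'⟩ := concSteps_delay M v rest l'
      (fun x => if x ∈ ρ then (0 : ℝ) else w2 x + 0) d l wf hd (by rw [hE]; exact hrun)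
    exact ⟨w2, hw2.1, wf', he, hel, hhi, 0, le_rfl, hsat0, hrun'⟩

/-- Correspondence between symbolic runs in the parametric
probabilistic zone graph and concrete runs: a symbolic run reaching `(l, C)` has an
equivalent concrete run (same locations and edges) under valuation `v` iff `v`
satisfies the projection of `C` onto the parameters. -/
theorem symbolic_concrete_correspondence {A L X P : Type*} [DecidableEq X]
    (M : PIPTA A L X P) (tr : List (EdgeT A L X P × Finset X × L)) (l : L)
    (C : PZone X P) (h : M.SymbSteps M.init (pInitZone X P) tr l C) (v : P → NNRat) :
    (∃ w, M.ConcSteps v M.init (fun _ => 0) tr l w) ↔ vSatZone v C := by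
  constructor
  · rintro ⟨w, hc⟩
    have h0 : ((fun _ : X => (0 : ℝ)), fun p => ((v p : ℚ) : ℝ)) ∈
        pElapse { wu : (X → ℝ) × (P → ℝ) | (∀ x, wu.1 x = 0) ∧ ∀ p, 0 ≤ wu.2 p } :=
      ⟨fun _ => 0, fun p => ((v p : ℚ) : ℝ), ⟨fun _ => rfl, fun p => by positivity⟩,
        0, le_rfl, by simp⟩
    exact ⟨w, conc_to_symb M v tr M.init _ l C _ w h hc h0⟩
  · rintro ⟨w, hw⟩
    obtain ⟨w0, h0, wf, hrun⟩ := symb_to_conc M v tr M.init _ l C h w hw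
    obtain ⟨w1, u1, ⟨hz, _⟩, d, hd, heq⟩ := h0
    rw [Prod.mk.injEq] at heq
    obtain ⟨rfl, _⟩ := heq
    have hz' : ∀ x, w1 x = 0 := hz
    have hE : (fun x => (fun _ : X => (0 : ℝ)) x + d) = (fun x => w1 x + d) := by
      funext x; simp [hz' x]
    obtain ⟨wf', hrun'⟩ := concSteps_delay M v tr M.init (fun _ => 0) d l wf hd
      (by rw [hE]; exact hrun)
    exact ⟨wf', hrun'⟩

end
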